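/- The image of the standard pinwheel triangle under the matrix M_P = [[2,1],[-1,2]] can be partitioned (up to boundary overlaps of measure zero) into 5 triangles, each congruent to the standard pinwheel triangle, whose union equals the image and whose interiors are pairwise disjoint. -/

import Mathlib

open MeasureTheory

noncomputable def pt (a b : ℝ) : EuclideanSpace ℝ (Fin 2) :=
  (WithLp.equiv 2 (Fin 2 → ℝ)).symm ![a, b]

/-- The standard pinwheel triangle. -/
noncomputable def stdTriangle : Set (EuclideanSpace ℝ (Fin 2)) :=
  convexHull ℝ {pt (-0.5) (-0.5), pt 0.5 (-0.5), pt (-0.5) 1.5}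

/-- The pinwheel inflation map, multiplication by `M_P = [[2,1],[-1,2]]`. -/
noncomputable def inflate (p : EuclideanSpace ℝ (Fin 2)) : EuclideanSpace ℝ (Fin 2) :=
  pt (2 * (WithLp.equiv 2 (Fin 2 → ℝ) p) 0 + (WithLp.equiv 2 (Fin 2 → ℝ) p) 1)
     (-(WithLp.equiv 2 (Fin 2 → ℝ) p) 0 + 2 * (WithLp.equiv 2 (Fin 2 → ℝ) p) 1)

abbrev E2 := EuclideanSpace ℝ (Fin 2)

lemma E_ext {p q : E2} (h0 : p 0 = q 0) (h1 : p 1 = q 1) : p = q := by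
  ext i; fin_cases i <;> assumption

lemma combo_mem_tri {a b c : E2} {α β γ : ℝ} (hα : 0 ≤ α) (hβ : 0 ≤ β) (hγ : 0 ≤ γ)
    (hsum : α + β + γ = 1) : α • a + β • b + γ • c ∈ convexHull ℝ {a, b, c} := by
  have ha : a ∈ convexHull ℝ ({a, b, c} : Set E2) := subset_convexHull _ _ (by simp)
  have hb : b ∈ convexHull ℝ ({a, b, c} : Set E2) := subset_convexHull _ _ (by simp)
  have hc : c ∈ convexHull ℝ ({a, b, c} : Set E2) := subset_convexHull _ _ (by simp)
  have hconv := convex_convexHull ℝ ({a, b, c} : Set E2)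
  rcases eq_or_lt_of_le (add_nonneg hβ hγ) with h | h
  · have hβ0 : β = 0 := by linarith
    have hγ0 : γ = 0 := by linarith
    have hα1 : α = 1 := by linarith
    simpa [hβ0, hγ0, hα1] using ha
  · have hz := hconv hb hc (div_nonneg hβ h.le) (div_nonneg hγ h.le) (by field_simp)
    have := hconv ha hz hα (add_nonneg hβ hγ) (by linarith)
    have heq : α • a + (β + γ) • ((β / (β + γ)) • b + (γ / (β + γ)) • c)
        = α • a + β • b + γ • c := by
      rw [smul_add, smul_smul, smul_smul, mul_div_cancel₀ _ h.ne', mul_div_cancel₀ _ h.ne',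
        add_assoc]
    rwa [heq] at this

lemma mem_std_iff (p : E2) :
    p ∈ stdTriangle ↔ -0.5 ≤ p 0 ∧ -0.5 ≤ p 1 ∧ 2 * p 0 + p 1 ≤ 0.5 := by
  constructor
  · intro hp
    have hsub : stdTriangle ⊆ {q : E2 | -0.5 ≤ q 0 ∧ -0.5 ≤ q 1 ∧ 2 * q 0 + q 1 ≤ 0.5} := by
      apply convexHull_min
      · intro q hq
        rcases hq with h | h | h <;> subst h <;>
          refine ⟨by norm_num [pt], by norm_num [pt], by norm_num [pt]⟩
      · have l1 : IsLinearMap ℝ (fun q : E2 => q 0) := ⟨fun x y => rfl, fun c x => rfl⟩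
        have l2 : IsLinearMap ℝ (fun q : E2 => q 1) := ⟨fun x y => rfl, fun c x => rfl⟩
        have l3 : IsLinearMap ℝ (fun q : E2 => 2 * q 0 + q 1) := by
          constructor
          · intro x y; show 2 * (x 0 + y 0) + (x 1 + y 1) = _; ring
          · intro c x; show 2 * (c * x 0) + c * x 1 = c * (2 * x 0 + x 1); ring
        exact Convex.inter (convex_halfSpace_ge l1 (-0.5))
          (Convex.inter (convex_halfSpace_ge l2 (-0.5)) (convex_halfSpace_le l3 0.5))
    exact hsub hp
  · rintro ⟨h1, h2, h3⟩
    set x := p 0; set y := p 1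
    have key : ((0.5 - 2*x - y)/2) • pt (-0.5) (-0.5) + (x + 0.5) • pt 0.5 (-0.5)
        + ((y + 0.5)/2) • pt (-0.5) 1.5 = p := by
      apply E_ext
      · show (0.5 - 2*x - y)/2 * (-0.5) + (x + 0.5) * 0.5 + (y + 0.5)/2 * (-0.5) = x; ring
      · show (0.5 - 2*x - y)/2 * (-0.5) + (x + 0.5) * (-0.5) + (y + 0.5)/2 * 1.5 = y; ring
    rw [← key]
    exact combo_mem_tri (by linarith) (by linarith) (by linarith) (by ring)

/-- `(x,y) ↦ (-y, -x-1)` -/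
noncomputable def G1 : E2 ≃ᵢ E2 where
  toFun p := pt (-(p 1)) (-(p 0) - 1)
  invFun q := pt (-(q 1) - 1) (-(q 0))
  left_inv p := E_ext (by show -(-(p 0) - 1) - 1 = p 0; ring) (by show -(-(p 1)) = p 1; ring)
  right_inv q := E_ext (by show -(-(q 0)) = q 0; ring) (by show -(-(q 1) - 1) - 1 = q 1; ring)
  isometry_toFun := Isometry.of_dist_eq fun p q => by
    rw [EuclideanSpace.dist_eq, EuclideanSpace.dist_eq, Fin.sum_univ_two, Fin.sum_univ_two]
    simp only [Real.dist_eq, sq_abs]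
    congr 1
    show (-(p 1) - -(q 1))^2 + ((-(p 0) - 1) - (-(q 0) - 1))^2 = (p 0 - q 0)^2 + (p 1 - q 1)^2
    ring

/-- `(x,y) ↦ (-1-x, y)` -/
noncomputable def G2 : E2 ≃ᵢ E2 where
  toFun p := pt (-1 - p 0) (p 1)
  invFun q := pt (-1 - q 0) (q 1)
  left_inv p := E_ext (by show -1 - (-1 - p 0) = p 0; ring) (by show p 1 = p 1; rfl)
  right_inv q := E_ext (by show -1 - (-1 - q 0) = q 0; ring) (by show q 1 = q 1; rfl)
  isometry_toFun := Isometry.of_dist_eq fun p q => by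
    rw [EuclideanSpace.dist_eq, EuclideanSpace.dist_eq, Fin.sum_univ_two, Fin.sum_univ_two]
    simp only [Real.dist_eq, sq_abs]
    congr 1
    show ((-1 - p 0) - (-1 - q 0))^2 + (p 1 - q 1)^2 = (p 0 - q 0)^2 + (p 1 - q 1)^2
    ring

/-- `(x,y) ↦ (-x, y)` -/
noncomputable def G3 : E2 ≃ᵢ E2 where
  toFun p := pt (-(p 0)) (p 1)
  invFun q := pt (-(q 0)) (q 1)
  left_inv p := E_ext (by show -(-(p 0)) = p 0; ring) (by show p 1 = p 1; rfl)
  right_inv q := E_ext (by show -(-(q 0)) = q 0; ring) (by show q 1 = q 1; rfl)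
  isometry_toFun := Isometry.of_dist_eq fun p q => by
    rw [EuclideanSpace.dist_eq, EuclideanSpace.dist_eq, Fin.sum_univ_two, Fin.sum_univ_two]
    simp only [Real.dist_eq, sq_abs]
    congr 1
    show (-(p 0) - -(q 0))^2 + (p 1 - q 1)^2 = (p 0 - q 0)^2 + (p 1 - q 1)^2
    ring

/-- `(x,y) ↦ (-x, y+2)` -/
noncomputable def G4 : E2 ≃ᵢ E2 where
  toFun p := pt (-(p 0)) (p 1 + 2)
  invFun q := pt (-(q 0)) (q 1 - 2)
  left_inv p := E_ext (by show -(-(p 0)) = p 0; ring) (by show p 1 + 2 - 2 = p 1; ring)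
  right_inv q := E_ext (by show -(-(q 0)) = q 0; ring) (by show q 1 - 2 + 2 = q 1; ring)
  isometry_toFun := Isometry.of_dist_eq fun p q => by
    rw [EuclideanSpace.dist_eq, EuclideanSpace.dist_eq, Fin.sum_univ_two, Fin.sum_univ_two]
    simp only [Real.dist_eq, sq_abs]
    congr 1
    show (-(p 0) - -(q 0))^2 + ((p 1 + 2) - (q 1 + 2))^2 = (p 0 - q 0)^2 + (p 1 - q 1)^2
    ring

/-- `(x,y) ↦ (x, 1-y)` -/
noncomputable def G5 : E2 ≃ᵢ E2 where
  toFun p := pt (p 0) (1 - p 1)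
  invFun q := pt (q 0) (1 - q 1)
  left_inv p := E_ext (by show p 0 = p 0; rfl) (by show 1 - (1 - p 1) = p 1; ring)
  right_inv q := E_ext (by show q 0 = q 0; rfl) (by show 1 - (1 - q 1) = q 1; ring)
  isometry_toFun := Isometry.of_dist_eq fun p q => by
    rw [EuclideanSpace.dist_eq, EuclideanSpace.dist_eq, Fin.sum_univ_two, Fin.sum_univ_two]
    simp only [Real.dist_eq, sq_abs]
    congr 1
    show (p 0 - q 0)^2 + ((1 - p 1) - (1 - q 1))^2 = (p 0 - q 0)^2 + (p 1 - q 1)^2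
    ring

lemma mem_image_iso (e : E2 ≃ᵢ E2) (s : Set E2) (q : E2) : q ∈ ⇑e '' s ↔ e.symm q ∈ s := by
  constructor
  · rintro ⟨p, hp, rfl⟩; simpa using hp
  · intro h; exact ⟨e.symm q, h, e.apply_symm_apply q⟩

lemma mem_t1 (q : E2) : q ∈ ⇑G1 '' stdTriangle ↔
    q 1 ≤ -0.5 ∧ q 0 ≤ 0.5 ∧ -2.5 ≤ q 0 + 2 * q 1 := by
  rw [mem_image_iso, mem_std_iff]
  show (-0.5 ≤ -(q 1) - 1 ∧ -0.5 ≤ -(q 0) ∧ 2 * (-(q 1) - 1) + -(q 0) ≤ 0.5) ↔ _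
  constructor <;> rintro ⟨h1, h2, h3⟩ <;> exact ⟨by linarith, by linarith, by linarith⟩

lemma mem_t2 (q : E2) : q ∈ ⇑G2 '' stdTriangle ↔
    q 0 ≤ -0.5 ∧ -0.5 ≤ q 1 ∧ -2.5 ≤ 2 * q 0 - q 1 := by
  rw [mem_image_iso, mem_std_iff]
  show (-0.5 ≤ -1 - q 0 ∧ -0.5 ≤ q 1 ∧ 2 * (-1 - q 0) + q 1 ≤ 0.5) ↔ _
  constructor <;> rintro ⟨h1, h2, h3⟩ <;> exact ⟨by linarith, by linarith, by linarith⟩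

lemma mem_t3 (q : E2) : q ∈ ⇑G3 '' stdTriangle ↔
    q 0 ≤ 0.5 ∧ -0.5 ≤ q 1 ∧ q 1 ≤ 2 * q 0 + 0.5 := by
  rw [mem_image_iso, mem_std_iff]
  show (-0.5 ≤ -(q 0) ∧ -0.5 ≤ q 1 ∧ 2 * (-(q 0)) + q 1 ≤ 0.5) ↔ _
  constructor <;> rintro ⟨h1, h2, h3⟩ <;> exact ⟨by linarith, by linarith, by linarith⟩

lemma mem_t4 (q : E2) : q ∈ ⇑G4 '' stdTriangle ↔
    q 0 ≤ 0.5 ∧ 1.5 ≤ q 1 ∧ q 1 ≤ 2 * q 0 + 2.5 := by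
  rw [mem_image_iso, mem_std_iff]
  show (-0.5 ≤ -(q 0) ∧ -0.5 ≤ q 1 - 2 ∧ 2 * (-(q 0)) + (q 1 - 2) ≤ 0.5) ↔ _
  constructor <;> rintro ⟨h1, h2, h3⟩ <;> exact ⟨by linarith, by linarith, by linarith⟩

lemma mem_t5 (q : E2) : q ∈ ⇑G5 '' stdTriangle ↔
    -0.5 ≤ q 0 ∧ q 1 ≤ 1.5 ∧ 2 * q 0 - q 1 ≤ -0.5 := by
  rw [mem_image_iso, mem_std_iff]
  show (-0.5 ≤ q 0 ∧ -0.5 ≤ 1 - q 1 ∧ 2 * (q 0) + (1 - q 1) ≤ 0.5) ↔ _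
  constructor <;> rintro ⟨h1, h2, h3⟩ <;> exact ⟨by linarith, by linarith, by linarith⟩

lemma mem_inflate_iff (q : E2) : q ∈ inflate '' stdTriangle ↔
    -2.5 ≤ 2 * q 0 - q 1 ∧ -2.5 ≤ q 0 + 2 * q 1 ∧ q 0 ≤ 0.5 := by
  constructor
  · rintro ⟨p, hp, rfl⟩
    rw [mem_std_iff] at hp
    obtain ⟨h1, h2, h3⟩ := hp
    have e0 : (inflate p) 0 = 2 * p 0 + p 1 := rfl
    have e1 : (inflate p) 1 = -(p 0) + 2 * p 1 := rfl
    rw [e0, e1]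
    exact ⟨by linarith, by linarith, by linarith⟩
  · rintro ⟨h1, h2, h3⟩
    refine ⟨pt ((2 * q 0 - q 1)/5) ((q 0 + 2 * q 1)/5), ?_, ?_⟩
    · rw [mem_std_iff]
      refine ⟨?_, ?_, ?_⟩
      · show -0.5 ≤ (2 * q 0 - q 1)/5; linarith
      · show -0.5 ≤ (q 0 + 2 * q 1)/5; linarith
      · show 2 * ((2 * q 0 - q 1)/5) + (q 0 + 2 * q 1)/5 ≤ 0.5; linarith
    · apply E_ext
      · show 2 * ((2 * q 0 - q 1)/5) + (q 0 + 2 * q 1)/5 = q 0; ring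
      · show -((2 * q 0 - q 1)/5) + 2 * ((q 0 + 2 * q 1)/5) = q 1; ring

lemma disjoint_interiors {A B : Set E2} {a b c : ℝ} (hab : 0 < a^2 + b^2)
    (hA : ∀ p ∈ A, a * p 0 + b * p 1 ≤ c) (hB : ∀ p ∈ B, c ≤ a * p 0 + b * p 1) :
    Disjoint (interior A) (interior B) := by
  rw [Set.disjoint_left]
  intro p hpA hpB
  have hU : IsOpen (interior A ∩ interior B) := isOpen_interior.inter isOpen_interior
  obtain ⟨ε, hε, hball⟩ := Metric.isOpen_iff.mp hU p ⟨hpA, hpB⟩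
  set v : E2 := pt a b with hv
  set δ : ℝ := ε / (‖v‖ + 1) with hδdef
  have hnv : (0:ℝ) < ‖v‖ + 1 := by positivity
  have hδ : 0 < δ := div_pos hε hnv
  have hmem : p + δ • v ∈ Metric.ball p ε := by
    rw [Metric.mem_ball, dist_eq_norm, add_sub_cancel_left, norm_smul, Real.norm_eq_abs,
      abs_of_pos hδ]
    have heq : δ * (‖v‖ + 1) = ε := by
      rw [hδdef]; field_simp
    nlinarith [norm_nonneg v, hδ]
  have h2 := hball hmem
  have hA' := hA _ (interior_subset h2.1)
  have hB' := hB _ (interior_subset h2.2)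
  have e0 : (p + δ • v) 0 = p 0 + δ * a := rfl
  have e1 : (p + δ • v) 1 = p 1 + δ * b := rfl
  rw [e0, e1] at hA' hB'
  have hpA' := hA _ (interior_subset hpA)
  have hpB' := hB _ (interior_subset hpB)
  nlinarith [hδ, hab]

/-- The standard pinwheel triangle. -/
theorem pinwheel_subdivision :
    ∃ t : Fin 5 → Set (EuclideanSpace ℝ (Fin 2)),
      (∀ i, ∃ g : EuclideanSpace ℝ (Fin 2) ≃ᵢ EuclideanSpace ℝ (Fin 2),
        t i = g '' stdTriangle) ∧
      (⋃ i, t i) = inflate '' stdTriangle ∧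
      (∀ i j, i ≠ j → Disjoint (interior (t i)) (interior (t j))) := by
  refine ⟨![⇑G1 '' stdTriangle, ⇑G2 '' stdTriangle, ⇑G3 '' stdTriangle,
    ⇑G4 '' stdTriangle, ⇑G5 '' stdTriangle], ?_, ?_, ?_⟩
  · intro i
    fin_cases i
    · exact ⟨G1, rfl⟩
    · exact ⟨G2, rfl⟩
    · exact ⟨G3, rfl⟩
    · exact ⟨G4, rfl⟩
    · exact ⟨G5, rfl⟩
  · ext q
    simp only [Set.mem_iUnion]
    rw [mem_inflate_iff]
    constructor
    · rintro ⟨i, hi⟩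
      fin_cases i
      · obtain ⟨h1, h2, h3⟩ := (mem_t1 q).mp hi
        exact ⟨by linarith, by linarith, by linarith⟩
      · obtain ⟨h1, h2, h3⟩ := (mem_t2 q).mp hi
        exact ⟨by linarith, by linarith, by linarith⟩
      · obtain ⟨h1, h2, h3⟩ := (mem_t3 q).mp hi
        exact ⟨by linarith, by linarith, by linarith⟩
      · obtain ⟨h1, h2, h3⟩ := (mem_t4 q).mp hi
        exact ⟨by linarith, by linarith, by linarith⟩
      · obtain ⟨h1, h2, h3⟩ := (mem_t5 q).mp hi
        exact ⟨by linarith, by linarith, by linarith⟩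
    · rintro ⟨h1, h2, h3⟩
      by_cases c1 : q 1 ≤ -0.5
      · exact ⟨0, (mem_t1 q).mpr ⟨by linarith, by linarith, by linarith⟩⟩
      push_neg at c1
      by_cases c2 : q 0 ≤ -0.5
      · exact ⟨1, (mem_t2 q).mpr ⟨by linarith, by linarith, by linarith⟩⟩
      push_neg at c2
      by_cases c3 : 1.5 ≤ q 1
      · exact ⟨3, (mem_t4 q).mpr ⟨by linarith, by linarith, by linarith⟩⟩
      push_neg at c3
      by_cases c4 : q 1 ≤ 2 * q 0 + 0.5
      · exact ⟨2, (mem_t3 q).mpr ⟨by linarith, by linarith, by linarith⟩⟩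
      push_neg at c4
      exact ⟨4, (mem_t5 q).mpr ⟨by linarith, by linarith, by linarith⟩⟩
  · -- disjointness
    have D12 : Disjoint (interior (⇑G1 '' stdTriangle)) (interior (⇑G2 '' stdTriangle)) := by
      refine disjoint_interiors (a := 0) (b := 1) (c := -0.5) (by norm_num) ?_ ?_
      · intro p hp; obtain ⟨h1, h2, h3⟩ := (mem_t1 p).mp hp; linarith
      · intro p hp; obtain ⟨h1, h2, h3⟩ := (mem_t2 p).mp hp; linarith
    have D13 : Disjoint (interior (⇑G1 '' stdTriangle)) (interior (⇑G3 '' stdTriangle)) := by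
      refine disjoint_interiors (a := 0) (b := 1) (c := -0.5) (by norm_num) ?_ ?_
      · intro p hp; obtain ⟨h1, h2, h3⟩ := (mem_t1 p).mp hp; linarith
      · intro p hp; obtain ⟨h1, h2, h3⟩ := (mem_t3 p).mp hp; linarith
    have D14 : Disjoint (interior (⇑G1 '' stdTriangle)) (interior (⇑G4 '' stdTriangle)) := by
      refine disjoint_interiors (a := 0) (b := 1) (c := -0.5) (by norm_num) ?_ ?_
      · intro p hp; obtain ⟨h1, h2, h3⟩ := (mem_t1 p).mp hp; linarith
      · intro p hp; obtain ⟨h1, h2, h3⟩ := (mem_t4 p).mp hp; linarith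
    have D15 : Disjoint (interior (⇑G1 '' stdTriangle)) (interior (⇑G5 '' stdTriangle)) := by
      refine disjoint_interiors (a := 0) (b := 1) (c := -0.5) (by norm_num) ?_ ?_
      · intro p hp; obtain ⟨h1, h2, h3⟩ := (mem_t1 p).mp hp; linarith
      · intro p hp; obtain ⟨h1, h2, h3⟩ := (mem_t5 p).mp hp; linarith
    have D23 : Disjoint (interior (⇑G2 '' stdTriangle)) (interior (⇑G3 '' stdTriangle)) := by
      refine disjoint_interiors (a := 1) (b := 0) (c := -0.5) (by norm_num) ?_ ?_
      · intro p hp; obtain ⟨h1, h2, h3⟩ := (mem_t2 p).mp hp; linarith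
      · intro p hp; obtain ⟨h1, h2, h3⟩ := (mem_t3 p).mp hp; linarith
    have D24 : Disjoint (interior (⇑G2 '' stdTriangle)) (interior (⇑G4 '' stdTriangle)) := by
      refine disjoint_interiors (a := 1) (b := 0) (c := -0.5) (by norm_num) ?_ ?_
      · intro p hp; obtain ⟨h1, h2, h3⟩ := (mem_t2 p).mp hp; linarith
      · intro p hp; obtain ⟨h1, h2, h3⟩ := (mem_t4 p).mp hp; linarith
    have D25 : Disjoint (interior (⇑G2 '' stdTriangle)) (interior (⇑G5 '' stdTriangle)) := by
      refine disjoint_interiors (a := 1) (b := 0) (c := -0.5) (by norm_num) ?_ ?_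
      · intro p hp; obtain ⟨h1, h2, h3⟩ := (mem_t2 p).mp hp; linarith
      · intro p hp; obtain ⟨h1, h2, h3⟩ := (mem_t5 p).mp hp; linarith
    have D34 : Disjoint (interior (⇑G3 '' stdTriangle)) (interior (⇑G4 '' stdTriangle)) := by
      refine disjoint_interiors (a := 0) (b := 1) (c := 1.5) (by norm_num) ?_ ?_
      · intro p hp; obtain ⟨h1, h2, h3⟩ := (mem_t3 p).mp hp; linarith
      · intro p hp; obtain ⟨h1, h2, h3⟩ := (mem_t4 p).mp hp; linarith
    have D53 : Disjoint (interior (⇑G5 '' stdTriangle)) (interior (⇑G3 '' stdTriangle)) := by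
      refine disjoint_interiors (a := 2) (b := -1) (c := -0.5) (by norm_num) ?_ ?_
      · intro p hp; obtain ⟨h1, h2, h3⟩ := (mem_t5 p).mp hp; linarith
      · intro p hp; obtain ⟨h1, h2, h3⟩ := (mem_t3 p).mp hp; linarith
    have D54 : Disjoint (interior (⇑G5 '' stdTriangle)) (interior (⇑G4 '' stdTriangle)) := by
      refine disjoint_interiors (a := 0) (b := 1) (c := 1.5) (by norm_num) ?_ ?_
      · intro p hp; obtain ⟨h1, h2, h3⟩ := (mem_t5 p).mp hp; linarith
      · intro p hp; obtain ⟨h1, h2, h3⟩ := (mem_t4 p).mp hp; linarith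
    intro i j hij
    fin_cases i <;> fin_cases j
    · exact absurd rfl hij
    · exact D12
    · exact D13
    · exact D14
    · exact D15
    · exact D12.symm
    · exact absurd rfl hij
    · exact D23
    · exact D24
    · exact D25
    · exact D13.symm
    · exact D23.symm
    · exact absurd rfl hij
    · exact D34
    · exact D53.symm
    · exact D14.symm
    · exact D24.symm
    · exact D34.symm
    · exact absurd rfl hij
    · exact D54.symm
    · exact D15.symm
    · exact D25.symm
    · exact D53
    · exact D54
    · exact absurd rfl hij
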